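/- Let $(C,D)$ be a regular inclusion and let $F$ be a set of $D$-modular states on $C$ that is $N(C,D)$-invariant: for every $v \in N(C,D)$ and every $\rho \in F$ with $\rho(v^*v) \neq 0$, the state $x \mapsto \rho(v^* x v)/\rho(v^*v)$ belongs to $F$. Then $K_F := \{x \in C : \rho(x^*x) = 0 \text{ for all } \rho \in F\}$ is a closed two-sided ideal of $C$. Moreover, if the set of restrictions $\{\rho|_D : \rho \in F\}$ is weak-* dense in the character space of $D$, then $K_F \cap D = \{0\}$. -/

import Mathlib

open scoped ComplexOrder

/-- `v` is a normalizer of the subset `S`:  `v* S v ⊆ S` and `v S v* ⊆ S`. -/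
def IsNormalizer {C : Type*} [Mul C] [Star C] (S : Set C) (v : C) : Prop :=
  ∀ d ∈ S, star v * d * v ∈ S ∧ v * d * star v ∈ S

section PosFun
variable {C : Type*} [NormedRing C] [StarRing C] [CStarRing C] [NormedAlgebra ℂ C]
  [CompleteSpace C] [StarModule ℂ C] {ρ : C →ₗ[ℂ] ℂ}

lemma aux_im_sum (hpos : ∀ x : C, 0 ≤ ρ (star x * x)) (x : C) :
    (ρ (star x) + ρ x).im = 0 := by
  have e1 : star (x + 1) * (x + 1) = star x * x + (star x + (x + 1)) := by
    simp only [star_add, star_one]; noncomm_ring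
  have h1 := (Complex.nonneg_iff.mp (hpos (x + 1))).2
  have h2 := (Complex.nonneg_iff.mp (hpos x)).2
  have h3 := (Complex.nonneg_iff.mp (hpos 1)).2
  rw [e1, map_add, map_add, map_add] at h1
  have : ρ (star (1:C) * 1) = ρ 1 := by simp
  rw [this] at h3
  simp only [Complex.add_im] at h1 ⊢
  linarith

lemma aux_herm (hpos : ∀ x : C, 0 ≤ ρ (star x * x)) (x : C) :
    ρ (star x) = starRingEnd ℂ (ρ x) := by
  have h1 := aux_im_sum hpos x
  have h2 := aux_im_sum hpos (Complex.I • x)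
  rw [star_smul, map_smul, map_smul] at h2
  simp only [Complex.add_im, Complex.star_def, Complex.conj_I, Complex.neg_im,
    Complex.mul_im, Complex.I_re, Complex.I_im, Complex.neg_re, smul_eq_mul] at h1 h2
  apply Complex.ext <;>
    simp only [Complex.conj_re, Complex.conj_im] <;> linarith

lemma aux_herm' (hpos : ∀ x : C, 0 ≤ ρ (star x * x)) (x y : C) :
    ρ (star y * x) = starRingEnd ℂ (ρ (star x * y)) := by
  have := aux_herm hpos (star x * y)
  rwa [star_mul, star_star] at this

end PosFun

section CS
variable {C : Type*} [NormedRing C] [StarRing C] [CStarRing C] [NormedAlgebra ℂ C]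
  [CompleteSpace C] [StarModule ℂ C] {ρ : C →ₗ[ℂ] ℂ}

lemma aux_cs (hpos : ∀ x : C, 0 ≤ ρ (star x * x)) (x y : C) :
    Complex.normSq (ρ (star x * y)) ≤ (ρ (star x * x)).re * (ρ (star y * y)).re := by
  set A := (ρ (star x * x)).re with hA
  set B := (ρ (star y * y)).re with hB
  set c := ρ (star x * y) with hc
  have hA0 : 0 ≤ A := (Complex.nonneg_iff.mp (hpos x)).1
  have hB0 : 0 ≤ B := (Complex.nonneg_iff.mp (hpos y)).1
  have hAeq : ρ (star x * x) = (A : ℂ) :=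
    Complex.ext (by simp [hA]) (by simpa using ((Complex.nonneg_iff.mp (hpos x)).2).symm)
  have hBeq : ρ (star y * y) = (B : ℂ) :=
    Complex.ext (by simp [hB]) (by simpa using ((Complex.nonneg_iff.mp (hpos y)).2).symm)
  have key : ∀ s : ℝ, 0 ≤ A - 2 * s * Complex.normSq c + s ^ 2 * Complex.normSq c * B := by
    intro s
    have h := hpos (x + (-(s:ℂ) * starRingEnd ℂ c) • y)
    set t : ℂ := -(s:ℂ) * starRingEnd ℂ c with ht
    have expand : star (x + t • y) * (x + t • y)
        = star x * x + t • (star x * y) + (starRingEnd ℂ t) • (star y * x)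
          + (t * starRingEnd ℂ t) • (star y * y) := by
      simp only [star_add, star_smul, add_mul, mul_add, smul_mul_assoc, mul_smul_comm,
        smul_smul, smul_add, Complex.star_def]
      abel
    rw [expand] at h
    simp only [map_add, map_smul, smul_eq_mul] at h
    have hyx : ρ (star y * x) = starRingEnd ℂ c := aux_herm' hpos x y
    rw [hyx, ← hc, hAeq, hBeq] at h
    have htc : t * c = ((-(s * Complex.normSq c) : ℝ) : ℂ) := by
      rw [ht, mul_assoc, ← Complex.normSq_eq_conj_mul_self]
      push_cast; ring
    have htct : starRingEnd ℂ t * starRingEnd ℂ c = ((-(s * Complex.normSq c) : ℝ) : ℂ) := by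
      rw [← map_mul, htc, Complex.conj_ofReal]
    have htt : t * starRingEnd ℂ t = ((s ^ 2 * Complex.normSq c : ℝ) : ℂ) := by
      rw [Complex.mul_conj, ht]
      rw [Complex.normSq_mul, Complex.normSq_conj, Complex.normSq_neg, Complex.normSq_ofReal]
      push_cast; ring
    rw [htc, htct, htt] at h
    have : (0:ℂ) ≤ ((A - 2 * s * Complex.normSq c + s ^ 2 * Complex.normSq c * B : ℝ) : ℂ) := by
      convert h using 1
      push_cast; ring
    exact Complex.zero_le_real.mp this
  rcases eq_or_lt_of_le hB0 with hBz | hBpos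
  · have hnc : Complex.normSq c ≤ 0 := by
      by_contra hcon
      push_neg at hcon
      have hk := key ((A + 1) / (2 * Complex.normSq c))
      rw [← hBz] at hk
      have h4 : 2 * ((A + 1) / (2 * Complex.normSq c)) * Complex.normSq c = A + 1 := by
        field_simp
      simp only [mul_zero] at hk
      linarith
    have := Complex.normSq_nonneg c
    nlinarith
  · have hk := key (1 / B)
    have hB' : B ≠ 0 := ne_of_gt hBpos
    have h1 : (1/B) ^ 2 * Complex.normSq c * B = Complex.normSq c / B := by
      field_simp
    have h2 : 2 * (1/B) * Complex.normSq c = 2 * (Complex.normSq c / B) := by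
      field_simp
    rw [h1, h2] at hk
    have h3 : Complex.normSq c / B ≤ A := by linarith
    calc Complex.normSq c = (Complex.normSq c / B) * B := by field_simp
    _ ≤ A * B := by nlinarith
end CS

section More
variable {C : Type*} [NormedRing C] [StarRing C] [CStarRing C] [NormedAlgebra ℂ C]
  [CompleteSpace C] [StarModule ℂ C] {ρ : C →ₗ[ℂ] ℂ}

lemma aux_cs_zero (hpos : ∀ x : C, 0 ≤ ρ (star x * x)) {x : C}
    (hx : ρ (star x * x) = 0) (y : C) : ρ (star x * y) = 0 := by
  have h := aux_cs hpos x y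
  rw [hx] at h
  simp only [Complex.zero_re, zero_mul] at h
  exact Complex.normSq_eq_zero.mp (le_antisymm h (Complex.normSq_nonneg _))

lemma aux_cs_zero' (hpos : ∀ x : C, 0 ≤ ρ (star x * x)) {x : C}
    (hx : ρ (star x * x) = 0) (y : C) : ρ (star y * x) = 0 := by
  rw [aux_herm' hpos x y, aux_cs_zero hpos hx y, map_zero]

lemma aux_rho_nonneg [PartialOrder C] [StarOrderedRing C]
    (hpos : ∀ x : C, 0 ≤ ρ (star x * x)) {a : C} (ha : 0 ≤ a) : 0 ≤ ρ a := by
  rw [StarOrderedRing.nonneg_iff] at ha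
  induction ha using AddSubmonoid.closure_induction with
  | mem z hz => obtain ⟨s, rfl⟩ := hz; exact hpos s
  | zero => simp
  | add a b _ _ ha hb => rw [map_add]; exact add_nonneg ha hb

lemma aux_rho_mono [PartialOrder C] [StarOrderedRing C]
    (hpos : ∀ x : C, 0 ≤ ρ (star x * x)) {a b : C} (hab : a ≤ b) : ρ a ≤ ρ b := by
  have := aux_rho_nonneg hpos (sub_nonneg.mpr hab)
  rw [map_sub] at this
  exact sub_nonneg.mp this

lemma aux_conj_nonneg [PartialOrder C] [StarOrderedRing C]
    (hpos : ∀ x : C, 0 ≤ ρ (star x * x)) (x : C) {a : C} (ha : 0 ≤ a) :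
    0 ≤ ρ (star x * a * x) := by
  rw [StarOrderedRing.nonneg_iff] at ha
  induction ha using AddSubmonoid.closure_induction with
  | mem z hz =>
      obtain ⟨s, rfl⟩ := hz
      have : star x * (star s * s) * x = star (s * x) * (s * x) := by
        simp only [star_mul]; noncomm_ring
      rw [this]; exact hpos _
  | zero => simp
  | add a b _ _ ha hb =>
      have : star x * (a + b) * x = star x * a * x + star x * b * x := by noncomm_ring
      rw [this, map_add]; exact add_nonneg ha hb
end More

section Bound
variable {C : Type*} [NormedRing C] [StarRing C] [CStarRing C] [NormedAlgebra ℂ C]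
  [CompleteSpace C] [StarModule ℂ C] {ρ : C →ₗ[ℂ] ℂ}

lemma aux_rho_bound (hone : ρ 1 = 1) (hpos : ∀ x : C, 0 ≤ ρ (star x * x)) (y : C) :
    ‖ρ y‖ ≤ ‖y‖ := by
  letI : CStarAlgebra C :=
    { toNormedRing := ‹_›, toStarRing := ‹_›, toCompleteSpace := ‹_›,
      toCStarRing := ‹_›, toNormedAlgebra := ‹_›, toStarModule := ‹_› }
  letI : PartialOrder C := CStarAlgebra.spectralOrder C
  letI : StarOrderedRing C := CStarAlgebra.spectralOrderedRing C
  have hsa : IsSelfAdjoint (star y * y) := IsSelfAdjoint.star_mul_self y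
  have h1 : ρ (star y * y) ≤ ρ (algebraMap ℝ C ‖star y * y‖) :=
    aux_rho_mono hpos hsa.le_algebraMap_norm_self
  have h2 : ρ (algebraMap ℝ C ‖star y * y‖) = ((‖star y * y‖ : ℝ) : ℂ) := by
    rw [IsScalarTower.algebraMap_apply ℝ ℂ C, Algebra.algebraMap_eq_smul_one, map_smul,
      hone, smul_eq_mul, mul_one]
    norm_num
  rw [h2] at h1
  have h3 : (ρ (star y * y)).re ≤ ‖star y * y‖ := by
    have := (Complex.le_def.mp h1).1
    simpa using this
  have h4 : ‖star y * y‖ = ‖y‖ * ‖y‖ := CStarRing.norm_star_mul_self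
  have hcs := aux_cs hpos 1 y
  simp only [star_one, one_mul, hone, Complex.one_re] at hcs
  have h5 : Complex.normSq (ρ y) = ‖ρ y‖ ^ 2 := by
    rw [Complex.normSq_eq_norm_sq]
  nlinarith [norm_nonneg (ρ y), norm_nonneg y, hcs, h3, h4, h5]

lemma aux_rho_cont (hone : ρ 1 = 1) (hpos : ∀ x : C, 0 ≤ ρ (star x * x)) :
    Continuous ρ :=
  (ρ.mkContinuous 1 (fun y => by simpa using aux_rho_bound hone hpos y)).continuous
end Bound

/-- Let `(C,D)` be a regular inclusion and `F` an `N(C,D)`-invariant family of `D`-modular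
states.  Then `K_F = {x : ρ(x*x) = 0 for all ρ ∈ F}` is a closed two-sided ideal of `C`;
moreover if the restrictions `{ρ|_D : ρ ∈ F}` are weak-* dense in the character space of `D`,
then `K_F ∩ D = (0)`. -/
theorem invariant_states_left_kernel_isIdeal
    {C : Type*} [NormedRing C] [StarRing C] [CStarRing C] [NormedAlgebra ℂ C]
    [CompleteSpace C] [StarModule ℂ C]
    (D : StarSubalgebra ℂ C) (hDclosed : IsClosed (D : Set C))
    (hDcomm : ∀ a ∈ D, ∀ b ∈ D, a * b = b * a)
    -- regularity: the span of the normalizers is dense in `C`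
    (hreg : Dense ((Submodule.span ℂ {v : C | IsNormalizer (D : Set C) v} : Submodule ℂ C) : Set C))
    (F : Set (C →ₗ[ℂ] ℂ))
    -- every element of `F` is a `D`-modular state
    (hFstate : ∀ ρ ∈ F, ρ 1 = 1 ∧ ∀ x : C, 0 ≤ ρ (star x * x))
    (hFmod : ∀ ρ ∈ F, ∀ d ∈ D, ∀ x : C, ρ (d * x) = ρ d * ρ x ∧ ρ (x * d) = ρ x * ρ d)
    -- `F` is `N(C,D)`-invariant
    (hFinv : ∀ v : C, IsNormalizer (D : Set C) v → ∀ ρ ∈ F, ρ (star v * v) ≠ 0 →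
      ∃ ρ' ∈ F, ∀ x : C, ρ' x = ρ (star v * x * v) / ρ (star v * v)) :
    (IsClosed {x : C | ∀ ρ ∈ F, ρ (star x * x) = 0} ∧
      (0 : C) ∈ {x : C | ∀ ρ ∈ F, ρ (star x * x) = 0} ∧
      (∀ x ∈ {x : C | ∀ ρ ∈ F, ρ (star x * x) = 0},
        ∀ y ∈ {x : C | ∀ ρ ∈ F, ρ (star x * x) = 0},
          x + y ∈ {x : C | ∀ ρ ∈ F, ρ (star x * x) = 0}) ∧
      (∀ x ∈ {x : C | ∀ ρ ∈ F, ρ (star x * x) = 0}, ∀ c : C,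
        c * x ∈ {x : C | ∀ ρ ∈ F, ρ (star x * x) = 0} ∧
        x * c ∈ {x : C | ∀ ρ ∈ F, ρ (star x * x) = 0})) ∧
    -- if the restrictions of `F` to `D` are weak-* dense in the character space of `D`,
    -- then `K_F ∩ D = (0)`
    ((∀ σ : C → ℂ,
        (∀ a ∈ D, ∀ b ∈ D, σ (a + b) = σ a + σ b) →
        (∀ (c : ℂ), ∀ a ∈ D, σ (c • a) = c * σ a) →
        (∀ a ∈ D, ∀ b ∈ D, σ (a * b) = σ a * σ b) →
        σ 1 = 1 →
        ∀ ε > (0 : ℝ), ∀ s : Finset C, (∀ d ∈ s, d ∈ D) →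
          ∃ ρ ∈ F, ∀ d ∈ s, ‖ρ d - σ d‖ < ε) →
      ∀ x ∈ {x : C | ∀ ρ ∈ F, ρ (star x * x) = 0}, x ∈ D → x = 0) := by
  letI : CStarAlgebra C :=
    { toNormedRing := ‹_›, toStarRing := ‹_›, toCompleteSpace := ‹_›,
      toCStarRing := ‹_›, toNormedAlgebra := ‹_›, toStarModule := ‹_› }
  letI : PartialOrder C := CStarAlgebra.spectralOrder C
  letI : StarOrderedRing C := CStarAlgebra.spectralOrderedRing C
  have hpos : ∀ ρ ∈ F, ∀ x : C, 0 ≤ ρ (star x * x) := fun ρ hρ => (hFstate ρ hρ).2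
  have hone : ∀ ρ ∈ F, ρ (1 : C) = 1 := fun ρ hρ => (hFstate ρ hρ).1
  set K := {x : C | ∀ ρ ∈ F, ρ (star x * x) = 0} with hKdef
  -- closedness
  have hKclosed : IsClosed K := by
    have hset : K = ⋂ ρ ∈ F, {x : C | ρ (star x * x) = 0} := by
      ext x; simp [hKdef, Set.mem_iInter]
    rw [hset]
    refine isClosed_biInter fun ρ hρ => ?_
    have hc : Continuous fun x : C => ρ (star x * x) :=
      (aux_rho_cont (hone ρ hρ) (hpos ρ hρ)).comp (continuous_star.mul continuous_id)
    exact isClosed_eq hc continuous_const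
  have hK0 : (0 : C) ∈ K := fun ρ _ => by simp
  have hKadd : ∀ x ∈ K, ∀ y ∈ K, x + y ∈ K := by
    intro x hx y hy ρ hρ
    have e : star (x + y) * (x + y) = star x * x + (star x * y + (star y * x + star y * y)) := by
      simp only [star_add]; noncomm_ring
    rw [e, map_add, map_add, map_add, hx ρ hρ, hy ρ hρ,
      aux_cs_zero (hpos ρ hρ) (hx ρ hρ) y, aux_cs_zero' (hpos ρ hρ) (hx ρ hρ) y]
    simp
  have hKsmul : ∀ t : ℂ, ∀ x ∈ K, t • x ∈ K := by
    intro t x hx ρ hρ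
    have e : star (t • x) * (t • x) = (t * starRingEnd ℂ t) • (star x * x) := by
      simp [star_smul, smul_mul_assoc, mul_smul_comm, smul_smul, Complex.star_def]
    rw [e, map_smul, hx ρ hρ, smul_zero]
  have hKleft : ∀ x ∈ K, ∀ c : C, c * x ∈ K := by
    intro x hx c ρ hρ
    have e : star (c * x) * (c * x) = star x * (star c * c) * x := by
      simp only [star_mul]; noncomm_ring
    have h1 : 0 ≤ ρ (star x * (star c * c) * x) :=
      aux_conj_nonneg (hpos ρ hρ) x (star_mul_self_nonneg c)
    have h2 : 0 ≤ ρ (star x * (algebraMap ℝ C ‖star c * c‖ - star c * c) * x) :=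
      aux_conj_nonneg (hpos ρ hρ) x
        (sub_nonneg.mpr (IsSelfAdjoint.le_algebraMap_norm_self (IsSelfAdjoint.star_mul_self c)))
    have e2 : star x * (algebraMap ℝ C ‖star c * c‖ - star c * c) * x
        = ((‖star c * c‖ : ℝ) : ℂ) • (star x * x) - star x * (star c * c) * x := by
      rw [IsScalarTower.algebraMap_apply ℝ ℂ C, Algebra.algebraMap_eq_smul_one]
      simp only [Complex.coe_algebraMap, mul_sub, sub_mul, mul_smul_comm, smul_mul_assoc,
        mul_one]
    rw [e2, map_sub, map_smul, hx ρ hρ, smul_zero, zero_sub] at h2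
    rw [e]
    exact le_antisymm (neg_nonneg.mp h2) h1
  have hKright : ∀ x ∈ K, ∀ c : C, x * c ∈ K := by
    intro x hx c
    have hclosedR : IsClosed {c : C | x * c ∈ K} := hKclosed.preimage (continuous_mul_left x)
    have hsub : ((Submodule.span ℂ {v : C | IsNormalizer (D : Set C) v} : Submodule ℂ C) : Set C)
        ⊆ {c : C | x * c ∈ K} := by
      intro c hc
      induction hc using Submodule.span_induction with
      | mem v hv =>
        show x * v ∈ K
        intro ρ hρ
        have e : star (x * v) * (x * v) = star v * (star x * x) * v := by
          simp only [star_mul]; noncomm_ring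
        rw [e]
        by_cases hv0 : ρ (star v * v) = 0
        · have e' : star v * (star x * x) * v = star v * ((star x * x) * v) := by
            noncomm_ring
          rw [e']
          exact aux_cs_zero (hpos ρ hρ) hv0 _
        · obtain ⟨ρ', hρ', heq⟩ := hFinv v hv ρ hρ hv0
          have h0 : ρ' (star x * x) = 0 := hx ρ' hρ'
          rw [heq (star x * x)] at h0
          rcases div_eq_zero_iff.mp h0 with h | h
          · exact h
          · exact absurd h hv0
      | zero => show x * 0 ∈ K; rw [mul_zero]; exact hK0
      | add a b _ _ ha hb => show x * (a + b) ∈ K; rw [mul_add]; exact hKadd _ ha _ hb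
      | smul t a _ ha => show x * (t • a) ∈ K; rw [mul_smul_comm]; exact hKsmul t _ ha
    have hc : c ∈ closure ((Submodule.span ℂ {v : C | IsNormalizer (D : Set C) v}
        : Submodule ℂ C) : Set C) := hreg c
    have := closure_mono hsub hc
    rwa [hclosedR.closure_eq] at this
  refine ⟨⟨hKclosed, hK0, hKadd, fun x hx c => ⟨hKleft x hx c, hKright x hx c⟩⟩, ?_⟩
  -- Part 2
  intro hdense x hx hxD
  classical
  have hρx : ∀ ρ ∈ F, ρ x = 0 := by
    intro ρ hρ
    have hsx : star x ∈ D := star_mem hxD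
    have hmul := (hFmod ρ hρ (star x) hsx x).1
    rw [hx ρ hρ, aux_herm (hpos ρ hρ) x] at hmul
    have : Complex.normSq (ρ x) = 0 := by
      have := hmul.symm
      rw [← Complex.normSq_eq_conj_mul_self] at this
      exact_mod_cast this
    exact Complex.normSq_eq_zero.mp this
  letI : NormedCommRing ↥D :=
    { (inferInstance : NormedRing ↥D) with
      mul_comm := fun a b => Subtype.ext (hDcomm a a.2 b b.2) }
  letI : CompleteSpace ↥D := hDclosed.completeSpace_coe
  letI : CommCStarAlgebra ↥D := { mul_comm := fun a b => Subtype.ext (hDcomm a a.2 b b.2) }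
  have hchar : ∀ φ : WeakDual.characterSpace ℂ ↥D, φ ⟨x, hxD⟩ = 0 := by
    intro φ
    set σ : C → ℂ := fun c => if h : c ∈ D then φ ⟨c, h⟩ else 0 with hσ
    have hadd : ∀ a ∈ D, ∀ b ∈ D, σ (a + b) = σ a + σ b := by
      intro a ha b hb
      have hab : a + b ∈ D := add_mem ha hb
      simp only [hσ, dif_pos ha, dif_pos hb, dif_pos hab]
      have : (⟨a + b, hab⟩ : ↥D) = ⟨a, ha⟩ + ⟨b, hb⟩ := rfl
      rw [this, map_add]
    have hsmul' : ∀ (c : ℂ), ∀ a ∈ D, σ (c • a) = c * σ a := by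
      intro c a ha
      have hca : c • a ∈ D := SMulMemClass.smul_mem c ha
      simp only [hσ, dif_pos ha, dif_pos hca]
      have : (⟨c • a, hca⟩ : ↥D) = c • ⟨a, ha⟩ := rfl
      rw [this, map_smul, smul_eq_mul]
    have hmul' : ∀ a ∈ D, ∀ b ∈ D, σ (a * b) = σ a * σ b := by
      intro a ha b hb
      have hab : a * b ∈ D := mul_mem ha hb
      simp only [hσ, dif_pos ha, dif_pos hb, dif_pos hab]
      have : (⟨a * b, hab⟩ : ↥D) = ⟨a, ha⟩ * ⟨b, hb⟩ := rfl
      rw [this, map_mul]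
    have hone' : σ 1 = 1 := by
      have h1 : (1 : C) ∈ D := one_mem D
      simp only [hσ, dif_pos h1]
      have : (⟨(1 : C), h1⟩ : ↥D) = 1 := rfl
      rw [this, map_one]
    by_contra hne
    have hεpos : 0 < ‖φ ⟨x, hxD⟩‖ := norm_pos_iff.mpr hne
    obtain ⟨ρ, hρ, hd⟩ := hdense σ hadd hsmul' hmul' hone' _ hεpos {x}
      (by intro d hd; rw [Finset.mem_singleton] at hd; rwa [hd])
    have hlt := hd x (Finset.mem_singleton_self x)
    rw [hρx ρ hρ] at hlt
    simp only [hσ, dif_pos hxD, zero_sub, norm_neg] at hlt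
    exact lt_irrefl _ hlt
  have hz : WeakDual.gelfandTransform ℂ ↥D ⟨x, hxD⟩ = WeakDual.gelfandTransform ℂ ↥D 0 := by
    rw [map_zero]; ext φ; simpa using hchar φ
  have := (gelfandTransform_isometry ↥D).injective hz
  exact congrArg Subtype.val this
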